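/- Fix a natural number Am, a real weight w > 0, and ce : ℕ → ℝ, and let c(a,b) = w·ce(a) + (b+1)/(a+1) for a, b ∈ A = {0,…,Am} (naturals cast to reals). Define BR(b) as the largest minimizer of a ↦ c(a,b) over A. Then BR is nondecreasing on A: b ≤ b' ≤ Am implies BR(b) ≤ BR(b'). -/

import Mathlib

/-- In the adaptive-modulation game, the maximal best response
(the largest minimizer of `a ↦ c a b` over `A = {0,…,Am}`) is nondecreasing in
the opponent's action `b`. -/
theorem maximal_best_response_monotone (Am : ℕ) (w : ℝ) (hw : 0 < w)
    (ce : ℕ → ℝ) (c : ℕ → ℕ → ℝ)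
    (hc : ∀ a b : ℕ, c a b = w * ce a + ((b : ℝ) + 1) / ((a : ℝ) + 1))
    (BR : ℕ → ℕ)
    (hBRmem : ∀ b, b ≤ Am → BR b ≤ Am)
    (hBRmin : ∀ b, b ≤ Am → ∀ a, a ≤ Am → c (BR b) b ≤ c a b)
    (hBRmax : ∀ b, b ≤ Am → ∀ a, a ≤ Am →
      (∀ a', a' ≤ Am → c a b ≤ c a' b) → a ≤ BR b)
    (b b' : ℕ) (hbb' : b ≤ b') (hb' : b' ≤ Am) :
    BR b ≤ BR b' := by
  by_contra h
  push_neg at h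
  have hb : b ≤ Am := le_trans hbb' hb'
  set a := BR b with ha
  set a' := BR b' with ha'
  have haAm : a ≤ Am := hBRmem b hb
  have ha'Am : a' ≤ Am := hBRmem b' hb'
  -- decreasing differences: c a b' - c a b ≤ c a' b' - c a' b
  have hdiff : c a b' - c a b ≤ c a' b' - c a' b := by
    rw [hc, hc, hc, hc]
    have h1 : (0:ℝ) < (a' : ℝ) + 1 := by positivity
    have h2 : (0:ℝ) < (a : ℝ) + 1 := by positivity
    have hle : ((a' : ℝ) + 1) ≤ (a : ℝ) + 1 := by
      have : (a' : ℝ) ≤ a := Nat.cast_le.mpr h.le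
      linarith
    have hbb : (b : ℝ) ≤ b' := Nat.cast_le.mpr hbb'
    have key : ((b':ℝ) - b) / ((a:ℝ)+1) ≤ ((b':ℝ) - b) / ((a':ℝ)+1) :=
      div_le_div_of_nonneg_left (by linarith) h1 hle
    have e1 : w * ce a + ((b':ℝ)+1)/((a:ℝ)+1) - (w * ce a + ((b:ℝ)+1)/((a:ℝ)+1))
        = ((b':ℝ) - b) / ((a:ℝ)+1) := by field_simp; ring
    have e2 : w * ce a' + ((b':ℝ)+1)/((a':ℝ)+1) - (w * ce a' + ((b:ℝ)+1)/((a':ℝ)+1))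
        = ((b':ℝ) - b) / ((a':ℝ)+1) := by field_simp; ring
    linarith [e1, e2, key]
  -- a minimizes c · b, a' minimizes c · b'
  have hmin_a : c a b ≤ c a' b := hBRmin b hb a' ha'Am
  have hmin_a' : c a' b' ≤ c a b' := hBRmin b' hb' a haAm
  -- so c a b' ≤ c a' b', hence a is a minimizer at b'
  have hkey : c a b' ≤ c a' b' := by linarith
  have : a ≤ a' := hBRmax b' hb' a haAm (fun x hx => le_trans hkey (hBRmin b' hb' x hx))
  omega
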